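/- Let B(1), G_u, G_v be independent real random variables with B(1) standard normal, G_u centered normal with variance u > 0, and G_v centered normal with variance v > 0. Define X := B(1) + G_u·1_{B(1)>0} + G_v·1_{B(1)≤0}. Then E[X³] = 3·E[(B(1))⁺]·(u − v), which is nonzero whenever u ≠ v. -/

import Mathlib

open MeasureTheory ProbabilityTheory

section helpers
open Real Filter
open scoped ENNReal NNReal

section moments
variable {v : NNReal}

lemma gauss_int (hv : v ≠ 0) (f : ℝ → ℝ) :
    ∫ x, f x ∂(gaussianReal 0 v) = ∫ x, gaussianPDFReal 0 v x * f x := by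
  rw [gaussianReal_of_var_ne_zero 0 hv, gaussianPDF_def]
  have : ∀ x : ℝ, ENNReal.ofReal (gaussianPDFReal 0 v x)
      = ((gaussianPDFReal 0 v x).toNNReal : ℝ≥0∞) := fun x => rfl
  simp_rw [this]
  rw [integral_withDensity_eq_integral_smul
    (measurable_gaussianPDFReal 0 v).real_toNNReal f]
  congr 1
  ext x
  simp [NNReal.smul_def, Real.coe_toNNReal _ (gaussianPDFReal_nonneg 0 v x)]

lemma gauss_integrable_iff (hv : v ≠ 0) {f : ℝ → ℝ} :
    Integrable f (gaussianReal 0 v) ↔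
      Integrable (fun x => f x * gaussianPDFReal 0 v x) volume := by
  rw [gaussianReal_of_var_ne_zero 0 hv, gaussianPDF_def]
  rw [integrable_withDensity_iff (measurable_gaussianPDFReal 0 v).ennreal_ofReal
    (Filter.Eventually.of_forall fun x => ENNReal.ofReal_lt_top)]
  simp_rw [ENNReal.toReal_ofReal (gaussianPDFReal_nonneg 0 v _)]

end moments

section moments2
variable {v : NNReal}

lemma integrable_pow_mul_exp (b : ℝ) (hb : 0 < b) (n : ℕ) :
    Integrable (fun x : ℝ => x ^ n * rexp (-b * x ^ 2)) := by
  have := integrable_rpow_mul_exp_neg_mul_sq hb (s := (n : ℝ))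
    (lt_of_lt_of_le (by norm_num) (Nat.cast_nonneg n))
  simpa [Real.rpow_natCast] using this

lemma pdf_eq (x : ℝ) : gaussianPDFReal 0 v x
    = (Real.sqrt (2 * Real.pi * v))⁻¹ * rexp (-((2 * (v:ℝ))⁻¹) * x ^ 2) := by
  rw [gaussianPDFReal]
  congr 1
  rw [sub_zero]
  congr 1
  field_simp

lemma gauss_integrable_pow (hv : v ≠ 0) (n : ℕ) :
    Integrable (fun x => x ^ n) (gaussianReal 0 v) := by
  rw [gauss_integrable_iff hv]
  have hvpos : (0:ℝ) < (v:ℝ) := by positivity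
  have hb : (0:ℝ) < (2 * (v:ℝ))⁻¹ := by positivity
  have : (fun x : ℝ => x ^ n * gaussianPDFReal 0 v x)
      = fun x => (Real.sqrt (2 * Real.pi * v))⁻¹ *
        (x ^ n * rexp (-((2 * (v:ℝ))⁻¹) * x ^ 2)) := by
    funext x; rw [pdf_eq]; ring
  rw [this]
  exact (integrable_pow_mul_exp _ hb n).const_mul _

lemma gauss_integrable_of_le (hv : v ≠ 0) {f : ℝ → ℝ} (hf : Measurable f)
    (hbound : ∀ x, ‖f x‖ ≤ 1 + x ^ 2) :
    Integrable f (gaussianReal 0 v) := by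
  have h1 : Integrable (fun x : ℝ => 1 + x ^ 2) (gaussianReal 0 v) :=
    (integrable_const 1).add (gauss_integrable_pow hv 2)
  exact h1.mono' hf.aestronglyMeasurable (Filter.Eventually.of_forall hbound)

lemma gauss_map_neg (hv : v ≠ 0) :
    Measure.map (fun x : ℝ => -x) (gaussianReal 0 v) = gaussianReal 0 v := by
  have h := gaussianReal_map_const_mul (μ := 0) (v := v) (-1)
  rw [show (fun x : ℝ => -1 * x) = (fun x : ℝ => -x) from funext fun x => by ring] at h
  rw [h]
  congr 1
  · ring
  · apply NNReal.coe_injective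
    push_cast
    norm_num

lemma gauss_odd_moment (hv : v ≠ 0) {n : ℕ} (hn : Odd n) :
    ∫ x, x ^ n ∂(gaussianReal 0 v) = 0 := by
  have h := integral_map (φ := fun x : ℝ => -x) (μ := gaussianReal 0 v)
    measurable_neg.aemeasurable
    (f := fun x : ℝ => x ^ n) (measurable_id.pow_const n).aestronglyMeasurable
  rw [gauss_map_neg hv] at h
  simp_rw [hn.neg_pow] at h
  rw [integral_neg] at h
  linarith

end moments2

section moments3
variable {v : NNReal}
open Set

lemma integral_Ioi_pow_mul_exp {b : ℝ} (hb : 0 < b) (n : ℕ) :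
    ∫ x in Ioi (0:ℝ), x ^ n * rexp (-b * x ^ 2)
      = b ^ (-((n:ℝ) + 1)/2) * (1/2) * Real.Gamma (((n:ℝ) + 1)/2) := by
  have h := integral_rpow_mul_exp_neg_mul_rpow (p := 2) (q := (n:ℝ)) (b := b)
    (by norm_num) (lt_of_lt_of_le (by norm_num) (Nat.cast_nonneg n)) hb
  rw [← h]
  refine setIntegral_congr_fun measurableSet_Ioi (fun x hx => ?_)
  rw [show ((2:ℝ) = ((2:ℕ):ℝ)) by norm_num, Real.rpow_natCast, Real.rpow_natCast]

lemma gauss_second_moment (hv : v ≠ 0) :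
    ∫ x, x ^ 2 ∂(gaussianReal 0 v) = (v : ℝ) := by
  have hvpos : (0:ℝ) < (v:ℝ) := lt_of_le_of_ne v.2 (by exact_mod_cast (Ne.symm hv))
  have hb : (0:ℝ) < (2 * (v:ℝ))⁻¹ := by positivity
  rw [gauss_int hv]
  simp_rw [pdf_eq]
  have heven : (fun x : ℝ => (Real.sqrt (2 * Real.pi * v))⁻¹
        * rexp (-((2 * (v:ℝ))⁻¹) * x ^ 2) * x ^ 2)
      = fun x : ℝ => (fun y : ℝ => (Real.sqrt (2 * Real.pi * v))⁻¹
        * rexp (-((2 * (v:ℝ))⁻¹) * y ^ 2) * y ^ 2) |x| := by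
    funext x; simp [sq_abs]
  have habs := integral_comp_abs (f := fun y : ℝ => (Real.sqrt (2 * Real.pi * v))⁻¹
        * rexp (-((2 * (v:ℝ))⁻¹) * y ^ 2) * y ^ 2)
  rw [heven, habs]
  have : ∫ x in Ioi (0:ℝ), (Real.sqrt (2 * Real.pi * v))⁻¹
        * rexp (-((2 * (v:ℝ))⁻¹) * x ^ 2) * x ^ 2
      = (Real.sqrt (2 * Real.pi * v))⁻¹
        * ∫ x in Ioi (0:ℝ), x ^ 2 * rexp (-((2 * (v:ℝ))⁻¹) * x ^ 2) := by
    rw [← integral_const_mul]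
    refine setIntegral_congr_fun measurableSet_Ioi (fun x hx => by ring)
  rw [this, integral_Ioi_pow_mul_exp hb 2]
  have hG : Real.Gamma (((2:ℕ):ℝ) + 1) / 2 = 1 := by norm_num
  have hGamma : Real.Gamma ((((2:ℕ):ℝ) + 1)/2) = Real.sqrt Real.pi / 2 := by
    rw [show ((((2:ℕ):ℝ) + 1)/2) = 1/2 + 1 by norm_num, Real.Gamma_add_one (by norm_num),
      Real.Gamma_one_half_eq]
    ring
  rw [hGamma]
  rw [show (-(((2:ℕ):ℝ) + 1)/2) = -((3:ℝ)/2) by norm_num]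
  rw [Real.inv_rpow (by positivity), ← Real.rpow_neg (by positivity), neg_neg]
  have h32 : ((2:ℝ) * v) ^ ((3:ℝ)/2) = (2 * (v:ℝ)) * ((2:ℝ) * v) ^ ((1:ℝ)/2) := by
    rw [show ((3:ℝ)/2) = 1 + (1:ℝ)/2 by norm_num, Real.rpow_add (by positivity), Real.rpow_one]
  have hsqrt : Real.sqrt (2 * Real.pi * v) = ((2:ℝ) * v) ^ ((1:ℝ)/2) * Real.pi ^ ((1:ℝ)/2) := by
    rw [Real.sqrt_eq_rpow, show (2 * Real.pi * (v:ℝ)) = (2 * (v:ℝ)) * Real.pi by ring,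
      Real.mul_rpow (by positivity) (by positivity)]
  rw [h32, hsqrt, Real.sqrt_eq_rpow]
  have h1 : ((2:ℝ) * v) ^ ((1:ℝ)/2) ≠ 0 := by positivity
  have h2 : (Real.pi : ℝ) ^ ((1:ℝ)/2) ≠ 0 := by positivity
  field_simp
end moments3

section moments4
open Set

lemma gauss_plus_pos : 0 < ∫ x, max x 0 ∂(gaussianReal 0 1) := by
  have hb : (0:ℝ) < (2 * ((1:NNReal):ℝ))⁻¹ := by norm_num
  rw [gauss_int one_ne_zero]
  have hz : ∀ x : ℝ, x ∉ Ioi (0:ℝ) →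
      gaussianPDFReal 0 1 x * max x 0 = 0 := by
    intro x hx
    rw [max_eq_right (by simpa using hx)]
    ring
  rw [← setIntegral_eq_integral_of_forall_compl_eq_zero hz]
  have : ∫ x in Ioi (0:ℝ), gaussianPDFReal 0 1 x * max x 0
      = (Real.sqrt (2 * Real.pi * (1:NNReal)))⁻¹
        * ∫ x in Ioi (0:ℝ), x ^ 1 * rexp (-((2 * ((1:NNReal):ℝ))⁻¹) * x ^ 2) := by
    rw [← integral_const_mul]
    refine setIntegral_congr_fun measurableSet_Ioi (fun x hx => ?_)
    rw [pdf_eq, max_eq_left (le_of_lt hx)]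
    ring
  rw [this, integral_Ioi_pow_mul_exp hb 1]
  have h1 : Real.Gamma ((((1:ℕ):ℝ) + 1)/2) = 1 := by
    norm_num [Real.Gamma_one]
  rw [h1]
  have : (0:ℝ) < ((2 * ((1:NNReal):ℝ))⁻¹) ^ (-(((1:ℕ):ℝ) + 1)/2) := by
    apply Real.rpow_pos_of_pos; norm_num
  positivity
end moments4
end helpers

/-- Let `B`, `Gu`, `Gv` be independent, with `B` standard normal, `Gu ~ N(0,u)`,
`Gv ~ N(0,v)`, `u, v > 0`.  For `X := B + Gu·1_{B>0} + Gv·1_{B≤0}` one has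
`E[X³] = 3 E[B⁺] (u − v)`, which is nonzero whenever `u ≠ v`. -/
theorem third_moment_ocone_counterexample {Ω : Type*} [MeasurableSpace Ω]
    (P : Measure Ω) [IsProbabilityMeasure P] (B Gu Gv : Ω → ℝ)
    (u v : NNReal) (hu : 0 < u) (hv : 0 < v)
    (hB : Measure.map B P = gaussianReal 0 1)
    (hGu : Measure.map Gu P = gaussianReal 0 u)
    (hGv : Measure.map Gv P = gaussianReal 0 v)
    (hindep : iIndepFun ![B, Gu, Gv] P)
    (X : Ω → ℝ) (hX : ∀ ω, X ω = B ω + (if 0 < B ω then Gu ω else Gv ω)) :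
    (∫ ω, (X ω) ^ 3 ∂P = 3 * (∫ ω, max (B ω) 0 ∂P) * ((u : ℝ) - (v : ℝ))) ∧
      (u ≠ v → ∫ ω, (X ω) ^ 3 ∂P ≠ 0) := by
  have hu0 : u ≠ 0 := hu.ne'
  have hv0 : v ≠ 0 := hv.ne'
  -- a.e.-measurability of the three random variables
  have mB : AEMeasurable B P := by
    by_contra h
    rw [Measure.map_of_not_aemeasurable h] at hB
    exact (IsProbabilityMeasure.ne_zero (gaussianReal 0 1)) hB.symm
  have mGu : AEMeasurable Gu P := by
    by_contra h
    rw [Measure.map_of_not_aemeasurable h] at hGu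
    exact (IsProbabilityMeasure.ne_zero (gaussianReal 0 u)) hGu.symm
  have mGv : AEMeasurable Gv P := by
    by_contra h
    rw [Measure.map_of_not_aemeasurable h] at hGv
    exact (IsProbabilityMeasure.ne_zero (gaussianReal 0 v)) hGv.symm
  -- independence
  have iBGu : IndepFun B Gu P := by
    have := hindep.indepFun (i := 0) (j := 1) (by decide)
    simpa using this
  have iBGv : IndepFun B Gv P := by
    have := hindep.indepFun (i := 0) (j := 2) (by decide)
    simpa using this
  -- the cut functions
  set φ1 : ℝ → ℝ := fun x => if 0 < x then x ^ 2 else 0 with hφ1def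
  set φ2 : ℝ → ℝ := fun x => max x 0 with hφ2def
  set φ3 : ℝ → ℝ := fun x => if 0 < x then 1 else 0 with hφ3def
  set ψ1 : ℝ → ℝ := fun x => if 0 < x then 0 else x ^ 2 with hψ1def
  set ψ2 : ℝ → ℝ := fun x => min x 0 with hψ2def
  set ψ3 : ℝ → ℝ := fun x => if 0 < x then 0 else 1 with hψ3def
  have hs : MeasurableSet {x : ℝ | 0 < x} := measurableSet_lt measurable_const measurable_id
  have measφ1 : Measurable φ1 := Measurable.ite hs (measurable_id.pow_const 2) measurable_const
  have measφ2 : Measurable φ2 := measurable_id.max measurable_const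
  have measφ3 : Measurable φ3 := Measurable.ite hs measurable_const measurable_const
  have measψ1 : Measurable ψ1 := Measurable.ite hs measurable_const (measurable_id.pow_const 2)
  have measψ2 : Measurable ψ2 := measurable_id.min measurable_const
  have measψ3 : Measurable ψ3 := Measurable.ite hs measurable_const measurable_const
  have habs : ∀ x : ℝ, |x| ≤ 1 + x ^ 2 := by
    intro x
    nlinarith [sq_nonneg (|x| - 1), abs_nonneg x, sq_abs x]
  have bφ1 : ∀ x : ℝ, ‖φ1 x‖ ≤ 1 + x ^ 2 := by
    intro x; simp only [hφ1def, Real.norm_eq_abs]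
    split <;> simp <;> nlinarith [sq_nonneg x, sq_abs x, abs_nonneg x]
  have bφ2 : ∀ x : ℝ, ‖φ2 x‖ ≤ 1 + x ^ 2 := by
    intro x; simp only [hφ2def, Real.norm_eq_abs]
    refine le_trans ?_ (habs x)
    rw [abs_le]; constructor
    · exact le_trans (neg_nonpos_of_nonneg (abs_nonneg x)) (le_max_right x 0)
    · exact max_le (le_abs_self x) (abs_nonneg x)
  have bφ3 : ∀ x : ℝ, ‖φ3 x‖ ≤ 1 + x ^ 2 := by
    intro x; simp only [hφ3def, Real.norm_eq_abs]
    split <;> simp <;> positivity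
  have bψ1 : ∀ x : ℝ, ‖ψ1 x‖ ≤ 1 + x ^ 2 := by
    intro x; simp only [hψ1def, Real.norm_eq_abs]
    split <;> simp <;> nlinarith [sq_nonneg x, sq_abs x, abs_nonneg x]
  have bψ2 : ∀ x : ℝ, ‖ψ2 x‖ ≤ 1 + x ^ 2 := by
    intro x; simp only [hψ2def, Real.norm_eq_abs]
    refine le_trans ?_ (habs x)
    rw [abs_le]; constructor
    · have h := le_min (neg_abs_le x) (neg_nonpos.mpr (abs_nonneg x))
      linarith [h]
    · exact le_trans (min_le_right x 0) (abs_nonneg x)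
  have bψ3 : ∀ x : ℝ, ‖ψ3 x‖ ≤ 1 + x ^ 2 := by
    intro x; simp only [hψ3def, Real.norm_eq_abs]
    split <;> simp <;> positivity
  -- transfer of integrals and integrability from the Gaussian laws
  have keyB : ∀ (f : ℝ → ℝ), Measurable f →
      ∫ ω, f (B ω) ∂P = ∫ x, f x ∂(gaussianReal 0 1) := by
    intro f hf
    rw [← hB, integral_map mB hf.aestronglyMeasurable]
  have keyGu : ∀ (f : ℝ → ℝ), Measurable f →
      ∫ ω, f (Gu ω) ∂P = ∫ x, f x ∂(gaussianReal 0 u) := by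
    intro f hf
    rw [← hGu, integral_map mGu hf.aestronglyMeasurable]
  have keyGv : ∀ (f : ℝ → ℝ), Measurable f →
      ∫ ω, f (Gv ω) ∂P = ∫ x, f x ∂(gaussianReal 0 v) := by
    intro f hf
    rw [← hGv, integral_map mGv hf.aestronglyMeasurable]
  have intB : ∀ (f : ℝ → ℝ), Measurable f → Integrable f (gaussianReal 0 1) →
      Integrable (fun ω => f (B ω)) P := by
    intro f hf hint
    have := (integrable_map_measure hf.aestronglyMeasurable mB).mp (by rwa [hB])
    exact this
  have intGu : ∀ (f : ℝ → ℝ), Measurable f → Integrable f (gaussianReal 0 u) →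
      Integrable (fun ω => f (Gu ω)) P := by
    intro f hf hint
    exact (integrable_map_measure hf.aestronglyMeasurable mGu).mp (by rwa [hGu])
  have intGv : ∀ (f : ℝ → ℝ), Measurable f → Integrable f (gaussianReal 0 v) →
      Integrable (fun ω => f (Gv ω)) P := by
    intro f hf hint
    exact (integrable_map_measure hf.aestronglyMeasurable mGv).mp (by rwa [hGv])
  -- integrability of all the pieces
  have intB3 : Integrable (fun ω => B ω ^ 3) P :=
    intB _ (measurable_id.pow_const 3) (gauss_integrable_pow one_ne_zero 3)
  have intφ1B : Integrable (fun ω => φ1 (B ω)) P :=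
    intB _ measφ1 (gauss_integrable_of_le one_ne_zero measφ1 bφ1)
  have intφ2B : Integrable (fun ω => φ2 (B ω)) P :=
    intB _ measφ2 (gauss_integrable_of_le one_ne_zero measφ2 bφ2)
  have intφ3B : Integrable (fun ω => φ3 (B ω)) P :=
    intB _ measφ3 (gauss_integrable_of_le one_ne_zero measφ3 bφ3)
  have intψ1B : Integrable (fun ω => ψ1 (B ω)) P :=
    intB _ measψ1 (gauss_integrable_of_le one_ne_zero measψ1 bψ1)
  have intψ2B : Integrable (fun ω => ψ2 (B ω)) P :=
    intB _ measψ2 (gauss_integrable_of_le one_ne_zero measψ2 bψ2)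
  have intψ3B : Integrable (fun ω => ψ3 (B ω)) P :=
    intB _ measψ3 (gauss_integrable_of_le one_ne_zero measψ3 bψ3)
  have intGu1 : Integrable Gu P := by
    have := intGu _ (measurable_id.pow_const 1) (gauss_integrable_pow hu0 1)
    simpa using this
  have intGu2 : Integrable (fun ω => Gu ω ^ 2) P :=
    intGu _ (measurable_id.pow_const 2) (gauss_integrable_pow hu0 2)
  have intGu3 : Integrable (fun ω => Gu ω ^ 3) P :=
    intGu _ (measurable_id.pow_const 3) (gauss_integrable_pow hu0 3)
  have intGv1 : Integrable Gv P := by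
    have := intGv _ (measurable_id.pow_const 1) (gauss_integrable_pow hv0 1)
    simpa using this
  have intGv2 : Integrable (fun ω => Gv ω ^ 2) P :=
    intGv _ (measurable_id.pow_const 2) (gauss_integrable_pow hv0 2)
  have intGv3 : Integrable (fun ω => Gv ω ^ 3) P :=
    intGv _ (measurable_id.pow_const 3) (gauss_integrable_pow hv0 3)
  -- independence of composed functions
  have iφ1 : IndepFun (fun ω => φ1 (B ω)) (fun ω => Gu ω) P :=
    iBGu.comp measφ1 measurable_id
  have iφ2 : IndepFun (fun ω => φ2 (B ω)) (fun ω => Gu ω ^ 2) P :=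
    iBGu.comp measφ2 (measurable_id.pow_const 2)
  have iφ3 : IndepFun (fun ω => φ3 (B ω)) (fun ω => Gu ω ^ 3) P :=
    iBGu.comp measφ3 (measurable_id.pow_const 3)
  have iψ1 : IndepFun (fun ω => ψ1 (B ω)) (fun ω => Gv ω) P :=
    iBGv.comp measψ1 measurable_id
  have iψ2 : IndepFun (fun ω => ψ2 (B ω)) (fun ω => Gv ω ^ 2) P :=
    iBGv.comp measψ2 (measurable_id.pow_const 2)
  have iψ3 : IndepFun (fun ω => ψ3 (B ω)) (fun ω => Gv ω ^ 3) P :=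
    iBGv.comp measψ3 (measurable_id.pow_const 3)
  -- integrability of products
  have ip1 : Integrable (fun ω => φ1 (B ω) * Gu ω) P := iφ1.integrable_mul intφ1B intGu1
  have ip2 : Integrable (fun ω => φ2 (B ω) * Gu ω ^ 2) P := iφ2.integrable_mul intφ2B intGu2
  have ip3 : Integrable (fun ω => φ3 (B ω) * Gu ω ^ 3) P := iφ3.integrable_mul intφ3B intGu3
  have ip4 : Integrable (fun ω => ψ1 (B ω) * Gv ω) P := iψ1.integrable_mul intψ1B intGv1
  have ip5 : Integrable (fun ω => ψ2 (B ω) * Gv ω ^ 2) P := iψ2.integrable_mul intψ2B intGv2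
  have ip6 : Integrable (fun ω => ψ3 (B ω) * Gv ω ^ 3) P := iψ3.integrable_mul intψ3B intGv3
  -- values of the factor integrals
  have vGu1 : ∫ ω, Gu ω ∂P = 0 := by
    have h0 := gauss_odd_moment (v := u) hu0 odd_one
    have h1 := keyGu (fun x => x ^ 1) (measurable_id.pow_const 1)
    simp only [pow_one] at h0 h1
    rw [h1, h0]
  have vGu2 : ∫ ω, Gu ω ^ 2 ∂P = (u : ℝ) := by
    rw [keyGu (fun x => x ^ 2) (measurable_id.pow_const 2), gauss_second_moment hu0]
  have vGu3 : ∫ ω, Gu ω ^ 3 ∂P = 0 := by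
    rw [keyGu (fun x => x ^ 3) (measurable_id.pow_const 3),
      gauss_odd_moment hu0 (⟨1, by norm_num⟩ : Odd 3)]
  have vGv1 : ∫ ω, Gv ω ∂P = 0 := by
    have h0 := gauss_odd_moment (v := v) hv0 odd_one
    have h1 := keyGv (fun x => x ^ 1) (measurable_id.pow_const 1)
    simp only [pow_one] at h0 h1
    rw [h1, h0]
  have vGv2 : ∫ ω, Gv ω ^ 2 ∂P = (v : ℝ) := by
    rw [keyGv (fun x => x ^ 2) (measurable_id.pow_const 2), gauss_second_moment hv0]
  have vGv3 : ∫ ω, Gv ω ^ 3 ∂P = 0 := by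
    rw [keyGv (fun x => x ^ 3) (measurable_id.pow_const 3),
      gauss_odd_moment hv0 (⟨1, by norm_num⟩ : Odd 3)]
  have vB1 : ∫ ω, B ω ∂P = 0 := by
    have h0 := gauss_odd_moment (v := 1) one_ne_zero odd_one
    have h1 := keyB (fun x => x ^ 1) (measurable_id.pow_const 1)
    simp only [pow_one] at h0 h1
    rw [h1, h0]
  have vB3 : ∫ ω, B ω ^ 3 ∂P = 0 := by
    rw [keyB (fun x => x ^ 3) (measurable_id.pow_const 3),
      gauss_odd_moment one_ne_zero (⟨1, by norm_num⟩ : Odd 3)]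
  set m : ℝ := ∫ ω, max (B ω) 0 ∂P with hm
  have hmφ2 : ∫ ω, φ2 (B ω) ∂P = m := rfl
  have hmpos : 0 < m := by
    rw [hm, show (fun ω => max (B ω) 0) = fun ω => φ2 (B ω) from rfl]
    rw [keyB φ2 measφ2]
    exact gauss_plus_pos
  have vψ2 : ∫ ω, ψ2 (B ω) ∂P = -m := by
    have hsplit : (fun ω => ψ2 (B ω)) = fun ω => B ω - φ2 (B ω) := by
      funext ω
      simp only [hψ2def, hφ2def]
      rcases le_total (B ω) 0 with h | h
      · rw [min_eq_left h, max_eq_right h]; ring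
      · rw [min_eq_right h, max_eq_left h]; ring
    have intB1 : Integrable B P := by
      have := intB _ (measurable_id.pow_const 1) (gauss_integrable_pow one_ne_zero 1)
      simpa using this
    rw [hsplit, integral_sub intB1 intφ2B, vB1, hmφ2]
    ring
  -- factorization of products
  have fp1 : ∫ ω, φ1 (B ω) * Gu ω ∂P = 0 := by
    rw [iφ1.integral_fun_mul_eq_mul_integral ((measφ1.comp_aemeasurable mB).aestronglyMeasurable)
      mGu.aestronglyMeasurable, vGu1, mul_zero]
  have fp2 : ∫ ω, φ2 (B ω) * Gu ω ^ 2 ∂P = m * u := by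
    rw [iφ2.integral_fun_mul_eq_mul_integral ((measφ2.comp_aemeasurable mB).aestronglyMeasurable)
      ((mGu.pow_const 2).aestronglyMeasurable), vGu2, hmφ2]
  have fp3 : ∫ ω, φ3 (B ω) * Gu ω ^ 3 ∂P = 0 := by
    rw [iφ3.integral_fun_mul_eq_mul_integral ((measφ3.comp_aemeasurable mB).aestronglyMeasurable)
      ((mGu.pow_const 3).aestronglyMeasurable), vGu3, mul_zero]
  have fp4 : ∫ ω, ψ1 (B ω) * Gv ω ∂P = 0 := by
    rw [iψ1.integral_fun_mul_eq_mul_integral ((measψ1.comp_aemeasurable mB).aestronglyMeasurable)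
      mGv.aestronglyMeasurable, vGv1, mul_zero]
  have fp5 : ∫ ω, ψ2 (B ω) * Gv ω ^ 2 ∂P = -m * v := by
    rw [iψ2.integral_fun_mul_eq_mul_integral ((measψ2.comp_aemeasurable mB).aestronglyMeasurable)
      ((mGv.pow_const 2).aestronglyMeasurable), vGv2, vψ2]
  have fp6 : ∫ ω, ψ3 (B ω) * Gv ω ^ 3 ∂P = 0 := by
    rw [iψ3.integral_fun_mul_eq_mul_integral ((measψ3.comp_aemeasurable mB).aestronglyMeasurable)
      ((mGv.pow_const 3).aestronglyMeasurable), vGv3, mul_zero]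
  -- pointwise expansion of X³
  have hsum : ∀ ω, X ω ^ 3 = B ω ^ 3 + (3 * (φ1 (B ω) * Gu ω) + (3 * (φ2 (B ω) * Gu ω ^ 2)
      + (φ3 (B ω) * Gu ω ^ 3 + (3 * (ψ1 (B ω) * Gv ω) + (3 * (ψ2 (B ω) * Gv ω ^ 2)
      + ψ3 (B ω) * Gv ω ^ 3))))) := by
    intro ω
    rw [hX ω]
    by_cases h : 0 < B ω
    · simp only [hφ1def, hφ2def, hφ3def, hψ1def, hψ2def, hψ3def, if_pos h,
        max_eq_left h.le, min_eq_right h.le]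
      ring
    · simp only [hφ1def, hφ2def, hφ3def, hψ1def, hψ2def, hψ3def, if_neg h,
        max_eq_right (not_lt.mp h), min_eq_left (not_lt.mp h)]
      ring
  have c1 : Integrable (fun ω => 3 * (φ1 (B ω) * Gu ω)) P := ip1.const_mul 3
  have c2 : Integrable (fun ω => 3 * (φ2 (B ω) * Gu ω ^ 2)) P := ip2.const_mul 3
  have c4 : Integrable (fun ω => 3 * (ψ1 (B ω) * Gv ω)) P := ip4.const_mul 3
  have c5 : Integrable (fun ω => 3 * (ψ2 (B ω) * Gv ω ^ 2)) P := ip5.const_mul 3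
  have T5 : Integrable (fun ω => 3 * (ψ2 (B ω) * Gv ω ^ 2) + ψ3 (B ω) * Gv ω ^ 3) P :=
    c5.add ip6
  have T4 : Integrable (fun ω => 3 * (ψ1 (B ω) * Gv ω) + (3 * (ψ2 (B ω) * Gv ω ^ 2)
      + ψ3 (B ω) * Gv ω ^ 3)) P := c4.add T5
  have T3 : Integrable (fun ω => φ3 (B ω) * Gu ω ^ 3 + (3 * (ψ1 (B ω) * Gv ω)
      + (3 * (ψ2 (B ω) * Gv ω ^ 2) + ψ3 (B ω) * Gv ω ^ 3))) P := ip3.add T4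
  have T2 : Integrable (fun ω => 3 * (φ2 (B ω) * Gu ω ^ 2) + (φ3 (B ω) * Gu ω ^ 3
      + (3 * (ψ1 (B ω) * Gv ω) + (3 * (ψ2 (B ω) * Gv ω ^ 2) + ψ3 (B ω) * Gv ω ^ 3)))) P :=
    c2.add T3
  have T1 : Integrable (fun ω => 3 * (φ1 (B ω) * Gu ω) + (3 * (φ2 (B ω) * Gu ω ^ 2)
      + (φ3 (B ω) * Gu ω ^ 3 + (3 * (ψ1 (B ω) * Gv ω) + (3 * (ψ2 (B ω) * Gv ω ^ 2)
      + ψ3 (B ω) * Gv ω ^ 3))))) P := c1.add T2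
  have fp1' : ∫ ω, 3 * (φ1 (B ω) * Gu ω) ∂P = 0 := by
    rw [MeasureTheory.integral_const_mul, fp1, mul_zero]
  have fp2' : ∫ ω, 3 * (φ2 (B ω) * Gu ω ^ 2) ∂P = 3 * (m * u) := by
    rw [MeasureTheory.integral_const_mul, fp2]
  have fp4' : ∫ ω, 3 * (ψ1 (B ω) * Gv ω) ∂P = 0 := by
    rw [MeasureTheory.integral_const_mul, fp4, mul_zero]
  have fp5' : ∫ ω, 3 * (ψ2 (B ω) * Gv ω ^ 2) ∂P = 3 * (-m * v) := by
    rw [MeasureTheory.integral_const_mul, fp5]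
  have main : ∫ ω, X ω ^ 3 ∂P = 3 * m * ((u : ℝ) - (v : ℝ)) := by
    simp only [hsum]
    rw [integral_add intB3 T1, integral_add c1 T2, integral_add c2 T3, integral_add ip3 T4,
      integral_add c4 T5, integral_add c5 ip6,
      vB3, fp1', fp2', fp3, fp4', fp5', fp6]
    ring
  refine ⟨main, fun huv => ?_⟩
  rw [main]
  have : (u : ℝ) - (v : ℝ) ≠ 0 := sub_ne_zero_of_ne (by exact_mod_cast huv)
  positivity
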